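/- Let d ≥ 1, N ≥ 1, f ∈ L_N(ℝ^d), and i ∈ {1,…,d}. Then the function x ↦ R_i f(x), where R_i f(x) is the principal value lim_{ε'→0⁺} ∫_{{y : |x−y| > ε'}} f(y)·(x_i − y_i)/|x−y|^{d+1} dy (which exists for every x), is continuous on ℝ^d. -/

import Mathlib

open MeasureTheory Filter Topology Real

noncomputable section

abbrev Ed (d : ℕ) := EuclideanSpace ℝ (Fin d)

/-- Truncated Riesz integral: `∫_{‖x-y‖>ε} f(y) (x_i - y_i)/‖x-y‖^(d+1) dy`. -/
noncomputable def truncRiesz (d : ℕ) (i : Fin d) (f : Ed d → ℝ) (x : Ed d) (ε : ℝ) : ℝ :=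
  ∫ y in {y : Ed d | ε < ‖x - y‖}, f y * ((x i - y i) / ‖x - y‖ ^ (d + 1))

/-- The principal value Riesz transform of `f` at `x` exists and equals `L`. -/
def RieszPV (d : ℕ) (i : Fin d) (f : Ed d → ℝ) (x : Ed d) (L : ℝ) : Prop :=
  Tendsto (truncRiesz d i f x) (𝓝[>] (0:ℝ)) (𝓝 L)

/-- The class `L_N(ℝ^d)` with constants `C` and `ε`. -/
structure IsLN (d N : ℕ) (f : Ed d → ℝ) (C ε : ℝ) : Prop where
  smooth : ContDiff ℝ 1 f
  Cpos : 0 < C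
  eps_nonneg : 0 ≤ ε
  eps_lt_one : ε < 1
  decay : ∀ x : Ed d, |f x| ≤ C * (1 + ‖x‖) ^ (-(d:ℝ) - N + ε)
  deriv_decay : ∀ (x : Ed d) (j : Fin d),
      |fderiv ℝ f x (EuclideanSpace.single j 1)| ≤ C * (1 + ‖x‖) ^ (-(d:ℝ) - N - 1 + ε)
  moments : ∀ β : Fin d → ℕ, (∑ j, β j) < N →
      ∫ x : Ed d, (∏ j, (x j) ^ (β j)) * f x = 0

private lemma abs_coord_le_norm {d : ℕ} (z : Ed d) (i : Fin d) : |z i| ≤ ‖z‖ := by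
  have h : |z i|^2 ≤ ∑ j, ‖z j‖^2 := by
    have := Finset.single_le_sum (f := fun j => ‖z j‖^2) (fun j _ => sq_nonneg _)
      (Finset.mem_univ i)
    simpa [Real.norm_eq_abs, sq_abs] using this
  calc |z i| = √(|z i|^2) := by rw [Real.sqrt_sq_eq_abs, abs_abs]
    _ ≤ √(∑ j, ‖z j‖^2) := Real.sqrt_le_sqrt h
    _ = ‖z‖ := (EuclideanSpace.norm_eq z).symm

set_option maxHeartbeats 1000000 in
/-- For `f ∈ L_N(ℝ^d)`, the (everywhere-defined) principal-value Riesz transform is continuous. -/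
theorem riesz_pv_continuous (d N : ℕ) (hd : 1 ≤ d) (hN : 1 ≤ N)
    (f : Ed d → ℝ) (C ε : ℝ) (hf : IsLN d N f C ε) (i : Fin d)
    (g : Ed d → ℝ) (hg : ∀ x : Ed d, RieszPV d i f x (g x)) :
    Continuous g := by
  classical
  have hN1 : (1:ℝ) ≤ N := by exact_mod_cast hN
  set r : ℝ := (d:ℝ) + N - ε with hr_def
  have hdr : (d:ℝ) < r := by
    simp only [hr_def]; linarith [hf.eps_lt_one]
  have hr_pos : 0 < r := lt_of_le_of_lt (Nat.cast_nonneg d) hdr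
  have hexp : -(d:ℝ) - N + ε = -r := by simp only [hr_def]; ring
  haveI : Nontrivial (Ed d) := by
    apply Module.nontrivial_of_finrank_pos (R := ℝ) (M := Ed d)
    rw [finrank_euclideanSpace_fin]; omega
  have hfc : Continuous f := hf.smooth.continuous
  -- kernel measurability
  have hK_meas : Measurable (fun z : Ed d => z i / ‖z‖ ^ (d+1)) := by fun_prop
  -- kernel bound
  have hKb : ∀ (z : Ed d) (c : ℝ), 0 < c → c ≤ ‖z‖ → |z i / ‖z‖^(d+1)| ≤ (c^d)⁻¹ := by
    intro z c hc hcz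
    have hz : 0 < ‖z‖ := lt_of_lt_of_le hc hcz
    have hkey : |z i / ‖z‖^(d+1)| ≤ (‖z‖^d)⁻¹ := by
      rw [abs_div, abs_of_nonneg (by positivity : (0:ℝ) ≤ ‖z‖^(d+1)), div_le_iff₀ (by positivity)]
      calc |z i| ≤ ‖z‖ := abs_coord_le_norm z i
        _ = (‖z‖^d)⁻¹ * ‖z‖^(d+1) := by
            rw [pow_succ]; field_simp
    refine hkey.trans ?_
    apply inv_anti₀ (by positivity)
    exact pow_le_pow_left₀ hc.le hcz d
  -- decay with exponent -r
  have hfd : ∀ y : Ed d, |f y| ≤ C * (1 + ‖y‖)^(-r) := by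
    intro y; have := hf.decay y; rwa [hexp] at this
  -- integrability of shifted decay profiles
  have hdecayInt : ∀ x : Ed d, Integrable (fun z : Ed d => (1 + ‖x - z‖) ^ (-r)) := by
    intro x
    have h0 : Integrable (fun z : Ed d => (1 + ‖z‖) ^ (-r)) := by
      apply integrable_one_add_norm; rwa [finrank_euclideanSpace_fin]
    exact ((Measure.measurePreserving_sub_left volume x).integrable_comp_emb
      (MeasurableEquiv.subLeft x).measurableEmbedding).2 h0
  -- Lipschitz estimate
  set M : ℝ := C * d with hM_def
  have hM_nonneg : 0 ≤ M := mul_nonneg hf.Cpos.le (Nat.cast_nonneg d)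
  have hlip : ∀ a b : Ed d, |f a - f b| ≤ M * ‖a - b‖ := by
    have hder : ∀ x : Ed d, ‖fderiv ℝ f x‖ ≤ M := by
      intro x
      apply ContinuousLinearMap.opNorm_le_bound _ hM_nonneg
      intro v
      have hvrepr : v = ∑ j, v j • EuclideanSpace.single j 1 := by
        have := (EuclideanSpace.basisFun (Fin d) ℝ).sum_repr v
        simp only [EuclideanSpace.basisFun_apply, EuclideanSpace.basisFun_repr] at this
        exact this.symm
      have hmap : fderiv ℝ f x v = ∑ j, v j • fderiv ℝ f x (EuclideanSpace.single j 1) := by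
        conv_lhs => rw [hvrepr]
        rw [map_sum]
        simp
      rw [hmap]
      calc ‖∑ j, v j • fderiv ℝ f x (EuclideanSpace.single j 1)‖
          ≤ ∑ j, ‖v j • fderiv ℝ f x (EuclideanSpace.single j 1)‖ := norm_sum_le _ _
        _ ≤ ∑ _j : Fin d, C * ‖v‖ := by
            apply Finset.sum_le_sum; intro j _
            rw [norm_smul]
            have h1 : ‖fderiv ℝ f x (EuclideanSpace.single j 1)‖ ≤ C := by
              have h2 := hf.deriv_decay x j
              have h3 : (1 + ‖x‖) ^ (-(d:ℝ) - N - 1 + ε) ≤ 1 := by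
                apply Real.rpow_le_one_of_one_le_of_nonpos
                  (by linarith [norm_nonneg x])
                have h4 : (0:ℝ) ≤ d := Nat.cast_nonneg d
                linarith [hf.eps_lt_one]
              calc ‖fderiv ℝ f x (EuclideanSpace.single j 1)‖
                  = |fderiv ℝ f x (EuclideanSpace.single j 1)| := Real.norm_eq_abs _
                _ ≤ C * (1 + ‖x‖) ^ (-(d:ℝ) - N - 1 + ε) := h2
                _ ≤ C * 1 := mul_le_mul_of_nonneg_left h3 hf.Cpos.le
                _ = C := mul_one C
            have h5 : ‖v j‖ ≤ ‖v‖ := by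
              rw [Real.norm_eq_abs]; exact abs_coord_le_norm v j
            calc ‖v j‖ * ‖fderiv ℝ f x (EuclideanSpace.single j 1)‖
                ≤ ‖v‖ * C := mul_le_mul h5 h1 (norm_nonneg _) (norm_nonneg _)
              _ = C * ‖v‖ := mul_comm _ _
        _ = M * ‖v‖ := by
            rw [Finset.sum_const, Finset.card_univ, Fintype.card_fin, nsmul_eq_mul]
            simp only [hM_def]; ring
    intro a b
    have := Convex.norm_image_sub_le_of_norm_fderiv_le
      (fun x _ => (hf.smooth.differentiable one_ne_zero).differentiableAt)
      (fun x _ => hder x) convex_univ (Set.mem_univ b) (Set.mem_univ a)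
    simpa [Real.norm_eq_abs] using this
  -- measurability of sets
  have hSmeas : ∀ e : ℝ, MeasurableSet {z : Ed d | e < ‖z‖} :=
    fun e => (isOpen_lt continuous_const continuous_norm).measurableSet
  have hAmeas : ∀ δ e : ℝ, MeasurableSet {z : Ed d | δ < ‖z‖ ∧ ‖z‖ ≤ e} := by
    intro δ e
    exact (hSmeas δ).inter ((isClosed_le continuous_norm continuous_const).measurableSet)
  -- change of variables
  have hcov : ∀ (x : Ed d) (e : ℝ), truncRiesz d i f x e
      = ∫ z in {z : Ed d | e < ‖z‖}, f (x - z) * (z i / ‖z‖ ^ (d+1)) := by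
    intro x e
    have hset : (fun z : Ed d => x - z) ⁻¹' {y : Ed d | e < ‖x - y‖} = {z : Ed d | e < ‖z‖} := by
      ext z; simp [sub_sub_cancel]
    have h := (Measure.measurePreserving_sub_left (volume : Measure (Ed d)) x).setIntegral_preimage_emb
      (MeasurableEquiv.subLeft x).measurableEmbedding
      (fun y => f y * ((x i - y i) / ‖x - y‖ ^ (d+1))) {y : Ed d | e < ‖x - y‖}
    calc truncRiesz d i f x e
        = ∫ z in (fun z : Ed d => x - z) ⁻¹' {y : Ed d | e < ‖x - y‖},
            f (x - z) * ((x i - (x - z) i) / ‖x - (x - z)‖ ^ (d+1)) := h.symm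
      _ = ∫ z in {z : Ed d | e < ‖z‖}, f (x - z) * (z i / ‖z‖ ^ (d+1)) := by
          rw [hset]
          apply setIntegral_congr_fun (hSmeas e)
          intro z _
          have h1 : x - (x - z) = z := sub_sub_cancel x z
          have h2 : x i - (x - z) i = z i := by
            rw [PiLp.sub_apply]; ring
          show f (x - z) * ((x i - (x - z) i) / ‖x - (x - z)‖ ^ (d+1))
              = f (x - z) * (z i / ‖z‖ ^ (d+1))
          rw [h1, h2]
  -- integrability on truncated regions
  have hGint : ∀ (x : Ed d) (δ : ℝ), 0 < δ →
      IntegrableOn (fun z => f (x - z) * (z i / ‖z‖^(d+1))) {z : Ed d | δ < ‖z‖} volume := by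
    intro x δ hδ
    apply Integrable.mono' (((hdecayInt x).const_mul (C * (δ^d)⁻¹)).integrableOn
      (s := {z : Ed d | δ < ‖z‖}))
    · exact ((hfc.comp (continuous_const.sub continuous_id)).aestronglyMeasurable.mul
        hK_meas.aestronglyMeasurable).restrict
    · rw [ae_restrict_iff' (hSmeas δ)]
      apply ae_of_all; intro z hz
      rw [Real.norm_eq_abs, abs_mul]
      calc |f (x - z)| * |z i / ‖z‖^(d+1)|
          ≤ (C * (1 + ‖x - z‖)^(-r)) * (δ^d)⁻¹ :=
            mul_le_mul (hfd (x - z)) (hKb z δ hδ (le_of_lt hz)) (abs_nonneg _)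
              (mul_nonneg hf.Cpos.le (Real.rpow_nonneg (by positivity) _))
        _ = C * (δ^d)⁻¹ * (1 + ‖x - z‖)^(-r) := by ring
  -- splitting into annulus
  have hsplit : ∀ (x : Ed d) (δ e : ℝ), 0 < δ → δ ≤ e →
      truncRiesz d i f x δ - truncRiesz d i f x e
        = ∫ z in {z : Ed d | δ < ‖z‖ ∧ ‖z‖ ≤ e}, f (x - z) * (z i / ‖z‖^(d+1)) := by
    intro x δ e hδ hδe
    have he : 0 < e := lt_of_lt_of_le hδ hδe
    rw [hcov x δ, hcov x e]
    have hun : {z : Ed d | δ < ‖z‖} = {z : Ed d | δ < ‖z‖ ∧ ‖z‖ ≤ e} ∪ {z : Ed d | e < ‖z‖} := by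
      ext z
      simp only [Set.mem_setOf_eq, Set.mem_union]
      constructor
      · intro h
        rcases le_or_gt ‖z‖ e with h' | h'
        · exact Or.inl ⟨h, h'⟩
        · exact Or.inr h'
      · rintro (⟨h1, _⟩ | h1)
        · exact h1
        · linarith
    have hdisj : Disjoint {z : Ed d | δ < ‖z‖ ∧ ‖z‖ ≤ e} {z : Ed d | e < ‖z‖} := by
      rw [Set.disjoint_left]
      rintro z ⟨_, h2⟩ h3
      exact absurd h3 (not_lt.2 h2)
    rw [hun, setIntegral_union hdisj (hSmeas e)
      ((hGint x δ hδ).mono_set (fun z hz => hz.1))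
      ((hGint x e he).mono_set (fun z hz => hz))]
    ring
  -- antisymmetry: kernel integral over annulus vanishes
  have hK0 : ∀ δ e : ℝ, ∫ z in {z : Ed d | δ < ‖z‖ ∧ ‖z‖ ≤ e}, (z i / ‖z‖^(d+1)) = 0 := by
    intro δ e
    set A := {z : Ed d | δ < ‖z‖ ∧ ‖z‖ ≤ e} with hA_def
    set F := A.indicator (fun z : Ed d => z i / ‖z‖^(d+1)) with hF_def
    have hmem : ∀ z : Ed d, (-z ∈ A) ↔ z ∈ A := by
      intro z; simp [hA_def, norm_neg]
    have hodd : ∀ z, F (-z) = -F z := by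
      intro z
      by_cases hz : z ∈ A
      · rw [hF_def, Set.indicator_of_mem ((hmem z).2 hz), Set.indicator_of_mem hz,
          norm_neg, PiLp.neg_apply, neg_div]
      · rw [hF_def, Set.indicator_of_notMem (fun h => hz ((hmem z).1 h)),
          Set.indicator_of_notMem hz, neg_zero]
    have h1 : ∫ z, F z = ∫ z, F (-z) := (integral_neg_eq_self F volume).symm
    have h2 : ∫ z, F (-z) = - ∫ z, F z := by
      simp only [hodd]
      exact integral_neg F
    have h3 : ∫ z, F z = 0 := by
      have := h1.trans h2
      linarith
    rw [← integral_indicator (hAmeas δ e)]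
    exact h3
  -- the annulus estimate
  set v : ℝ := (volume (Metric.ball (0:Ed d) 1)).toReal with hv_def
  have hv_nonneg : 0 ≤ v := ENNReal.toReal_nonneg
  set A0 : ℝ := d * v * M with hA0_def
  have hA0_nonneg : 0 ≤ A0 := by positivity
  have hann : ∀ (x : Ed d) (δ e : ℝ), 0 < δ → δ ≤ e →
      |truncRiesz d i f x δ - truncRiesz d i f x e| ≤ A0 * e := by
    intro x δ e hδ hδe
    have he : 0 < e := lt_of_lt_of_le hδ hδe
    rw [hsplit x δ e hδ hδe]
    set A := {z : Ed d | δ < ‖z‖ ∧ ‖z‖ ≤ e} with hA_def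
    have hAfin : volume A ≠ ⊤ := by
      have hsubA : A ⊆ Metric.closedBall (0:Ed d) e := by
        intro z hz
        simpa [Metric.mem_closedBall, dist_zero_right] using hz.2
      exact ne_of_lt (lt_of_le_of_lt (measure_mono hsubA) measure_closedBall_lt_top)
    have hKA : IntegrableOn (fun z : Ed d => z i / ‖z‖^(d+1)) A := by
      apply Measure.integrableOn_of_bounded hAfin hK_meas.aestronglyMeasurable (M := (δ^d)⁻¹)
      rw [ae_restrict_iff' (hAmeas δ e)]
      apply ae_of_all; intro z hz
      rw [Real.norm_eq_abs]
      exact hKb z δ hδ hz.1.le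
    have hGA : IntegrableOn (fun z => f (x - z) * (z i / ‖z‖^(d+1))) A :=
      (hGint x δ hδ).mono_set (fun z hz => hz.1)
    -- replace f (x - z) by the difference
    have hsub : ∫ z in A, f (x - z) * (z i / ‖z‖^(d+1))
        = ∫ z in A, (f (x - z) - f x) * (z i / ‖z‖^(d+1)) := by
      have heq : ∫ z in A, (f (x - z) - f x) * (z i / ‖z‖^(d+1))
          = ∫ z in A, (f (x - z) * (z i / ‖z‖^(d+1)) - f x * (z i / ‖z‖^(d+1))) := by
        apply setIntegral_congr_fun (hAmeas δ e); intro z _; ring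
      rw [heq, integral_sub hGA (hKA.const_mul (f x)), integral_const_mul, hK0 δ e,
        mul_zero, sub_zero]
    rw [hsub]
    -- bound by the radial profile
    have hb_int : IntegrableOn (fun z : Ed d => M * (‖z‖ * (‖z‖^d)⁻¹)) A := by
      apply Measure.integrableOn_of_bounded hAfin
        ((measurable_const.mul (measurable_norm.mul
          ((measurable_norm.pow_const d).inv))).aestronglyMeasurable)
        (M := M * (e * (δ^d)⁻¹))
      rw [ae_restrict_iff' (hAmeas δ e)]
      apply ae_of_all; intro z hz
      have hz0 : 0 < ‖z‖ := lt_trans hδ hz.1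
      have h1 : (‖z‖^d)⁻¹ ≤ (δ^d)⁻¹ :=
        inv_anti₀ (by positivity) (pow_le_pow_left₀ hδ.le hz.1.le d)
      have h2 : ‖z‖ * (‖z‖^d)⁻¹ ≤ e * (δ^d)⁻¹ :=
        mul_le_mul hz.2 h1 (by positivity) he.le
      show ‖M * (‖z‖ * (‖z‖^d)⁻¹)‖ ≤ M * (e * (δ^d)⁻¹)
      rw [Real.norm_eq_abs, abs_of_nonneg (mul_nonneg hM_nonneg (by positivity))]
      exact mul_le_mul_of_nonneg_left h2 hM_nonneg
    have habs : |∫ z in A, (f (x - z) - f x) * (z i / ‖z‖^(d+1))|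
        ≤ ∫ z in A, M * (‖z‖ * (‖z‖^d)⁻¹) := by
      rw [← Real.norm_eq_abs]
      apply norm_integral_le_of_norm_le hb_int
      rw [ae_restrict_iff' (hAmeas δ e)]
      apply ae_of_all; intro z hz
      have hz0 : 0 < ‖z‖ := lt_trans hδ hz.1
      have h1 : |f (x - z) - f x| ≤ M * ‖z‖ := by
        have := hlip (x - z) x
        have h2 : x - z - x = -z := by abel
        rwa [h2, norm_neg] at this
      have h2 : |z i / ‖z‖^(d+1)| ≤ (‖z‖^d)⁻¹ := hKb z ‖z‖ hz0 le_rfl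
      rw [Real.norm_eq_abs, abs_mul]
      calc |f (x - z) - f x| * |z i / ‖z‖^(d+1)|
          ≤ (M * ‖z‖) * (‖z‖^d)⁻¹ :=
            mul_le_mul h1 h2 (abs_nonneg _) (by positivity)
        _ = M * (‖z‖ * (‖z‖^d)⁻¹) := by ring
    refine habs.trans ?_
    -- polar-coordinates evaluation of the radial integral
    set ρ : ℝ → ℝ := (Set.Ioc δ e).indicator (fun t => M * (t * (t^d)⁻¹)) with hρ_def
    have hindA : ∀ z : Ed d,
        A.indicator (fun z : Ed d => M * (‖z‖ * (‖z‖^d)⁻¹)) z = ρ ‖z‖ := by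
      intro z
      by_cases hz : z ∈ A
      · rw [Set.indicator_of_mem hz, hρ_def,
          Set.indicator_of_mem (show ‖z‖ ∈ Set.Ioc δ e from ⟨hz.1, hz.2⟩)]
      · rw [Set.indicator_of_notMem hz, hρ_def,
          Set.indicator_of_notMem (show ‖z‖ ∉ Set.Ioc δ e from fun h => hz ⟨h.1, h.2⟩)]
    have hpolar : ∫ z in A, M * (‖z‖ * (‖z‖^d)⁻¹)
        = d • v • ∫ t in Set.Ioi (0:ℝ), t ^ (d - 1) • ρ t := by
      rw [← integral_indicator (hAmeas δ e)]
      calc ∫ z, A.indicator (fun z : Ed d => M * (‖z‖ * (‖z‖^d)⁻¹)) z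
          = ∫ z : Ed d, ρ ‖z‖ := by simp only [hindA]
        _ = d • v • ∫ t in Set.Ioi (0:ℝ), t ^ (d - 1) • ρ t := by
            rw [MeasureTheory.integral_fun_norm_addHaar (volume : Measure (Ed d)) ρ,
              finrank_euclideanSpace_fin]
            rfl
    rw [hpolar]
    have hinner : ∫ t in Set.Ioi (0:ℝ), t ^ (d - 1) • ρ t = M * (e - δ) := by
      have hcongr : ∀ t ∈ Set.Ioi (0:ℝ),
          t ^ (d - 1) • ρ t = (Set.Ioc δ e).indicator (fun _ => M) t := by
        intro t ht
        by_cases h : t ∈ Set.Ioc δ e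
        · rw [hρ_def, Set.indicator_of_mem h, Set.indicator_of_mem h, smul_eq_mul]
          have ht' : (0:ℝ) < t := ht
          have hsucc : d - 1 + 1 = d := Nat.succ_pred_eq_of_pos (show 0 < d by omega)
          calc t^(d-1) * (M * (t * (t^d)⁻¹)) = M * ((t^(d-1) * t) * (t^d)⁻¹) := by ring
            _ = M * (t^d * (t^d)⁻¹) := by rw [← pow_succ, hsucc]
            _ = M := by rw [mul_inv_cancel₀ (pow_ne_zero d (ne_of_gt ht')), mul_one]
        · rw [hρ_def, Set.indicator_of_notMem h, Set.indicator_of_notMem h, smul_zero]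
      rw [setIntegral_congr_fun measurableSet_Ioi hcongr,
        setIntegral_indicator measurableSet_Ioc]
      have hss : Set.Ioi (0:ℝ) ∩ Set.Ioc δ e = Set.Ioc δ e := by
        apply Set.inter_eq_self_of_subset_right
        intro t ht
        exact lt_trans hδ ht.1
      rw [hss, setIntegral_const, measureReal_def, Real.volume_Ioc, smul_eq_mul,
        ENNReal.toReal_ofReal (by linarith)]
      ring
    rw [hinner, nsmul_eq_mul, smul_eq_mul]
    have : (d:ℝ) * (v * (M * (e - δ))) ≤ A0 * e := by
      rw [hA0_def]
      nlinarith [hv_nonneg, hM_nonneg, (Nat.cast_nonneg d : (0:ℝ) ≤ d), hδ]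
    exact this
  -- key uniform estimate
  have hkey : ∀ (x : Ed d) (e : ℝ), 0 < e → |g x - truncRiesz d i f x e| ≤ A0 * e := by
    intro x e he
    have hgx : Tendsto (truncRiesz d i f x) (𝓝[>] (0:ℝ)) (𝓝 (g x)) := hg x
    have htends : Tendsto (fun δ => |truncRiesz d i f x δ - truncRiesz d i f x e|)
        (𝓝[>] (0:ℝ)) (𝓝 |g x - truncRiesz d i f x e|) :=
      (hgx.sub_const (truncRiesz d i f x e)).abs
    apply le_of_tendsto htends
    filter_upwards [Ioo_mem_nhdsGT_of_mem ⟨le_refl (0:ℝ), he⟩] with δ hδ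
    exact hann x δ e hδ.1 hδ.2.le
  -- continuity of each truncation
  have htc : ∀ e : ℝ, 0 < e → Continuous (fun x => truncRiesz d i f x e) := by
    intro e he
    have hfun : (fun x => truncRiesz d i f x e)
        = fun x => ∫ z in {z : Ed d | e < ‖z‖}, f (x - z) * (z i / ‖z‖^(d+1)) :=
      funext (fun x => hcov x e)
    rw [hfun, continuous_iff_continuousAt]
    intro x0
    apply tendsto_integral_filter_of_dominated_convergence
      (fun z : Ed d => ((e^d)⁻¹ * (C * 2^r)) * (1 + ‖x0 - z‖)^(-r))
    · apply Eventually.of_forall; intro x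
      exact ((hfc.comp (continuous_const.sub continuous_id)).aestronglyMeasurable.mul
        hK_meas.aestronglyMeasurable).restrict
    · filter_upwards [Metric.closedBall_mem_nhds x0 one_pos] with x hx
      rw [ae_restrict_iff' (hSmeas e)]
      apply ae_of_all; intro z hz
      have hb1 : (0:ℝ) < 1 + ‖x - z‖ := by positivity
      have hdist : ‖x0 - x‖ ≤ 1 := by
        rw [← dist_eq_norm]
        rw [Metric.mem_closedBall] at hx
        rw [dist_comm]; exact hx
      have htri : ‖x0 - z‖ ≤ ‖x0 - x‖ + ‖x - z‖ := by
        have := norm_sub_le_norm_sub_add_norm_sub x0 x z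
        exact this
      have h3 : (1 + ‖x0 - z‖) / 2 ≤ 1 + ‖x - z‖ := by
        linarith [norm_nonneg (x - z)]
      have h4 : (1 + ‖x - z‖)^(-r) ≤ ((1 + ‖x0 - z‖)/2)^(-r) :=
        Real.rpow_le_rpow_of_nonpos (by positivity) h3 (neg_nonpos.2 hr_pos.le)
      have h5 : ((1 + ‖x0 - z‖)/2)^(-r) = 2^r * (1 + ‖x0 - z‖)^(-r) := by
        rw [Real.div_rpow (by positivity) (by norm_num : (0:ℝ) ≤ 2),
          Real.rpow_neg (by norm_num : (0:ℝ) ≤ 2)]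
        field_simp
      rw [Real.norm_eq_abs, abs_mul]
      calc |f (x - z)| * |z i / ‖z‖^(d+1)|
          ≤ (C * (1 + ‖x - z‖)^(-r)) * (e^d)⁻¹ :=
            mul_le_mul (hfd (x - z)) (hKb z e he hz.le) (abs_nonneg _)
              (mul_nonneg hf.Cpos.le (Real.rpow_nonneg (by positivity) _))
        _ ≤ (C * (2^r * (1 + ‖x0 - z‖)^(-r))) * (e^d)⁻¹ := by
            apply mul_le_mul_of_nonneg_right _ (by positivity)
            apply mul_le_mul_of_nonneg_left _ hf.Cpos.le
            rw [← h5]; exact h4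
        _ = ((e^d)⁻¹ * (C * 2^r)) * (1 + ‖x0 - z‖)^(-r) := by ring
    · exact ((hdecayInt x0).const_mul _).integrableOn
    · apply ae_of_all; intro z
      exact (Tendsto.mul ((hfc.comp (continuous_id.sub continuous_const)).tendsto x0)
        tendsto_const_nhds)
  -- uniform convergence and conclusion
  have hTU : TendstoUniformly (fun e x => truncRiesz d i f x e) g (𝓝[>] (0:ℝ)) := by
    rw [Metric.tendstoUniformly_iff]
    intro η hη
    have hpos : (0:ℝ) < η / (A0 + 1) := by positivity
    filter_upwards [Ioo_mem_nhdsGT_of_mem ⟨le_refl (0:ℝ), hpos⟩] with e he x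
    rw [Real.dist_eq]
    calc |g x - truncRiesz d i f x e| ≤ A0 * e := hkey x e he.1
      _ < η := by
        have h1 : A0 * e ≤ (A0 + 1) * e := by nlinarith [he.1]
        have h2 : (A0 + 1) * e < (A0 + 1) * (η / (A0 + 1)) :=
          mul_lt_mul_of_pos_left he.2 (by positivity)
        have h3 : (A0 + 1) * (η / (A0 + 1)) = η := by field_simp
        linarith
  exact hTU.continuous (Eventually.frequently (by
    filter_upwards [self_mem_nhdsWithin] with e he
    exact htc e he))

end
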